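/- arXiv:2312.05651 — 4 statements merged into one kernel-verified Lean document; each statement's English description precedes it below -/
import Mathlib

section
/- Let $\|\cdot\|$ be a norm on $\mathbb{R}^d$, $\tau \in (0,1)$, and $R \in (0,1)$. If a convex body $J \subseteq B_1$ satisfies $B_R \subseteq J$ and a point $u$ satisfies $\|u\| \le R(1-\tau)/2$, then $\tau^{-1}(J - u) \cap B_1 \supseteq B_{R_1}$ where $R_1 := \min(R(1+\tau)/(2\tau), 1)$, and moreover $R_1 > R$. -/
open Pointwise

/-- One-step expansion lemma: if the convex body `J ⊆ B_1` contains `B_R` and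
`‖u‖ ≤ R(1-τ)/2`, then `τ⁻¹(J - u) ∩ B_1 ⊇ B_{R₁}` with
`R₁ = min (R(1+τ)/(2τ)) 1 > R`. -/
theorem one_step_expansion
    {E : Type*} [NormedAddCommGroup E] [NormedSpace ℝ E]
    (τ R : ℝ) (hτ : τ ∈ Set.Ioo (0:ℝ) 1) (hR : R ∈ Set.Ioo (0:ℝ) 1)
    (J : Set E) (hJconv : Convex ℝ J) (hJ1 : J ⊆ Metric.closedBall 0 1)
    (hRJ : Metric.closedBall (0 : E) R ⊆ J)
    (u : E) (hu : ‖u‖ ≤ R * (1 - τ) / 2) :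
    Metric.closedBall (0 : E) (min (R * (1 + τ) / (2 * τ)) 1)
        ⊆ (τ⁻¹ • ((fun x => x - u) '' J)) ∩ Metric.closedBall 0 1 ∧
      R < min (R * (1 + τ) / (2 * τ)) 1 := by
  obtain ⟨hτ0, hτ1⟩ := hτ
  obtain ⟨hR0, hR1⟩ := hR
  constructor
  · intro x hx
    rw [Metric.mem_closedBall, dist_zero_right] at hx
    have hx1 : ‖x‖ ≤ 1 := hx.trans (min_le_right _ _)
    have hxR : ‖x‖ ≤ R * (1 + τ) / (2 * τ) := hx.trans (min_le_left _ _)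
    constructor
    · rw [Set.mem_smul_set_iff_inv_smul_mem₀ (by positivity : (τ:ℝ)⁻¹ ≠ 0), inv_inv]
      refine ⟨τ • x + u, ?_, by simp⟩
      apply hRJ
      rw [Metric.mem_closedBall, dist_zero_right]
      calc ‖τ • x + u‖ ≤ ‖τ • x‖ + ‖u‖ := norm_add_le _ _
        _ = τ * ‖x‖ + ‖u‖ := by rw [norm_smul, Real.norm_of_nonneg hτ0.le]
        _ ≤ τ * (R * (1 + τ) / (2 * τ)) + R * (1 - τ) / 2 := by
            gcongr
        _ = R := by field_simp; ring
    · rw [Metric.mem_closedBall, dist_zero_right]; exact hx1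
  · rw [lt_min_iff]
    refine ⟨?_, hR1⟩
    rw [lt_div_iff₀ (by positivity)]
    nlinarith
end

section
/- Let $d \ge 1$, $\tau \in (0,1)$, $0 < r \le 2^{-d-1}$, $h \ge d+1$, and integers $0 \le i_0 < i_1 < \cdots < i_d \le h$. Then for every $j \in \{0, \ldots, d\}$: $2^j + r \tau^h \sum_{k=0}^{d} 2^k \tau^{-i_k} \le 1 + \tau^{i_j} \sum_{k=0}^{j} 2^k \tau^{-i_k}$. -/
/-- The key combinatorial inequality (equation (16) of the paper):
for `d ≥ 1`, `τ ∈ (0,1)`, `0 < r ≤ 2^{-(d+1)}`, `h ≥ d+1` and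
`0 ≤ i₀ < i₁ < ⋯ < i_d ≤ h`, for every `j ≤ d`:
`2^j + r τ^h ∑_{k=0}^d 2^k τ^{-i_k} ≤ 1 + τ^{i_j} ∑_{k=0}^j 2^k τ^{-i_k}`. -/
theorem key_inequality
    (d : ℕ) (hd : 1 ≤ d) (τ : ℝ) (hτ : τ ∈ Set.Ioo (0:ℝ) 1)
    (r : ℝ) (hr0 : 0 < r) (hr : r ≤ ((2:ℝ) ^ (d + 1))⁻¹)
    (h : ℕ) (hh : d + 1 ≤ h)
    (i : ℕ → ℕ) (hmono : ∀ k < d, i k < i (k + 1)) (hih : i d ≤ h) :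
    ∀ j ≤ d,
      (2:ℝ) ^ j + r * τ ^ h * ∑ k ∈ Finset.range (d + 1), (2:ℝ) ^ k * (τ⁻¹) ^ (i k)
        ≤ 1 + τ ^ (i j) * ∑ k ∈ Finset.range (j + 1), (2:ℝ) ^ k * (τ⁻¹) ^ (i k) := by
  obtain ⟨hτ0, hτ1⟩ := hτ
  intro j hj
  -- monotonicity of i
  have himono : ∀ a b, a ≤ b → b ≤ d → i a ≤ i b := by
    intro a b hab hbd
    induction b with
    | zero =>
        have : a = 0 := by omega
        simp [this]
    | succ n ih =>
      rcases Nat.lt_or_ge a (n+1) with hlt | hge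
      · exact le_trans (ih (by omega) (by omega)) (le_of_lt (hmono n (by omega)))
      · have : a = n + 1 := by omega
        simp [this]
  have hik : ∀ k ≤ d, i k ≤ h := fun k hk => le_trans (himono k d hk le_rfl) hih
  -- first bound: r * τ^h * ∑ ≤ 1
  have hb1 : r * τ ^ h * ∑ k ∈ Finset.range (d + 1), (2:ℝ) ^ k * (τ⁻¹) ^ (i k) ≤ 1 := by
    have hsum : τ ^ h * ∑ k ∈ Finset.range (d + 1), (2:ℝ) ^ k * (τ⁻¹) ^ (i k)
        ≤ ∑ k ∈ Finset.range (d + 1), (2:ℝ) ^ k := by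
      rw [Finset.mul_sum]
      apply Finset.sum_le_sum
      intro k hk
      have hk' : k ≤ d := by simpa using Nat.lt_succ_iff.mp (Finset.mem_range.mp hk)
      have h1 : τ ^ h * ((2:ℝ) ^ k * (τ⁻¹) ^ (i k)) = (2:ℝ) ^ k * τ ^ (h - i k) := by
        have hne : τ ^ (i k) ≠ 0 := by positivity
        rw [inv_pow]
        field_simp
        rw [← pow_add, Nat.add_sub_of_le (hik k hk')]
      rw [h1]
      have : τ ^ (h - i k) ≤ 1 := pow_le_one₀ (le_of_lt hτ0) (le_of_lt hτ1)
      nlinarith [pow_pos (by norm_num : (0:ℝ) < 2) k]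
    have hgeo : ∑ k ∈ Finset.range (d + 1), (2:ℝ) ^ k = 2 ^ (d+1) - 1 := by
      have := geom_sum_eq (by norm_num : (2:ℝ) ≠ 1) (d+1)
      rw [this]; ring
    have hpos : (0:ℝ) < 2 ^ (d+1) := by positivity
    calc r * τ ^ h * ∑ k ∈ Finset.range (d + 1), (2:ℝ) ^ k * (τ⁻¹) ^ (i k)
        = r * (τ ^ h * ∑ k ∈ Finset.range (d + 1), (2:ℝ) ^ k * (τ⁻¹) ^ (i k)) := by ring
      _ ≤ r * (2 ^ (d+1) - 1) := by
          apply mul_le_mul_of_nonneg_left _ (le_of_lt hr0)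
          rw [← hgeo]; exact hsum
      _ ≤ (2 ^ (d+1))⁻¹ * (2 ^ (d+1) - 1) := by
          apply mul_le_mul_of_nonneg_right hr
          nlinarith [one_le_pow₀ (by norm_num : (1:ℝ) ≤ 2) (n := d+1)]
      _ ≤ 1 := by
          rw [inv_mul_le_iff₀ hpos]; nlinarith
  -- second bound: 2^j ≤ τ^{i_j} * ∑_{k≤j}
  have hb2 : (2:ℝ) ^ j ≤ τ ^ (i j) * ∑ k ∈ Finset.range (j + 1), (2:ℝ) ^ k * (τ⁻¹) ^ (i k) := by
    have hterm : (2:ℝ) ^ j = τ ^ (i j) * ((2:ℝ) ^ j * (τ⁻¹) ^ (i j)) := by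
      rw [inv_pow]
      field_simp
    rw [hterm, Finset.mul_sum]
    apply Finset.single_le_sum (f := fun k => τ ^ (i j) * ((2:ℝ) ^ k * (τ⁻¹) ^ (i k)))
      (fun k _ => by positivity) (Finset.self_mem_range_succ j)
  linarith
end

section
/- Let $d \ge 1$, $\tau \in (0,1)$, $h \ge d+1$, $r \le 2^{-d-1}$, and integers $1 \le i_0 < i_1 < \cdots < i_d \le h$. Let $v_0, v_1, \ldots, v_d \in \mathbb{R}^d$ (with an arbitrary norm) satisfy $\|v_k - v_l\| \le \tau^{\min(i_k, i_l)}$ for all $k, l$. With $\lambda_j := 2^j \tau^{-i_j}/\sum_{k=0}^d 2^k \tau^{-i_k}$, the convex combination $w := \sum_{k=0}^d \lambda_k v_k$ satisfies $\|w - v_j\| \le \tau^{i_j} - r \tau^h$ for every $j = 0, \ldots, d$. Consequently, $-w \in \bigcap_{j=0}^d \big(B_{\tau^{i_j} - r\tau^h} - v_j\big)$, so this intersection of $d+1$ translated balls is nonempty. -/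
/-- Core deterministic estimate of the Helly argument: with weights
`λ_j = 2^j τ^{-i_j}/∑_k 2^k τ^{-i_k}` and points satisfying
`‖v_k - v_l‖ ≤ τ^{min(i_k, i_l)}`, the convex combination
`w = ∑ λ_k v_k` satisfies `‖w - v_j‖ ≤ τ^{i_j} - r τ^h` for all `j ≤ d`;
consequently `-w` belongs to every translated ball `B_{τ^{i_j} - rτ^h} - v_j`. -/
theorem helly_convex_combination
    {E : Type*} [NormedAddCommGroup E] [NormedSpace ℝ E]
    (d : ℕ) (hd : 1 ≤ d) (τ : ℝ) (hτ : τ ∈ Set.Ioo (0:ℝ) 1)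
    (h : ℕ) (hh : d + 1 ≤ h) (r : ℝ) (hr : r ≤ ((2:ℝ) ^ (d + 1))⁻¹)
    (i : ℕ → ℕ) (hi0 : 1 ≤ i 0) (hmono : ∀ k < d, i k < i (k + 1)) (hih : i d ≤ h)
    (v : ℕ → E)
    (hv : ∀ k ≤ d, ∀ l ≤ d, ‖v k - v l‖ ≤ τ ^ (min (i k) (i l))) :
    (∀ j ≤ d,
      ‖(∑ k ∈ Finset.range (d + 1),
          ((2:ℝ) ^ k * (τ⁻¹) ^ (i k) /
            ∑ k' ∈ Finset.range (d + 1), (2:ℝ) ^ k' * (τ⁻¹) ^ (i k')) • v k) - v j‖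
        ≤ τ ^ (i j) - r * τ ^ h) ∧
    (-(∑ k ∈ Finset.range (d + 1),
          ((2:ℝ) ^ k * (τ⁻¹) ^ (i k) /
            ∑ k' ∈ Finset.range (d + 1), (2:ℝ) ^ k' * (τ⁻¹) ^ (i k')) • v k))
      ∈ ⋂ j ∈ Finset.range (d + 1),
          ((fun x => x - v j) '' Metric.closedBall (0 : E) (τ ^ (i j) - r * τ ^ h)) := by
  obtain ⟨hτ0, hτ1⟩ := hτ
  have hτne : τ ≠ 0 := ne_of_gt hτ0
  -- monotonicity of i
  have mono : ∀ k l, k ≤ l → l ≤ d → i k ≤ i l := by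
    intro k l hkl hld
    induction l with
    | zero => simp [Nat.le_zero.mp hkl]
    | succ n ih =>
      rcases Nat.lt_or_ge k (n+1) with hk | hk
      · exact le_trans (ih (by omega) (by omega)) (hmono n (by omega)).le
      · have : k = n + 1 := by omega
        simp [this]
  have smono : ∀ k l, k < l → l ≤ d → i k < i l := by
    intro k l hkl hld
    have h1 : i k ≤ i (l-1) := mono k (l-1) (by omega) (by omega)
    have h2 : i (l-1) < i l := by
      have := hmono (l-1) (by omega)
      rwa [Nat.sub_add_cancel (by omega)] at this
    omega
  have hile : ∀ k, k ≤ d → i k ≤ h := fun k hk => le_trans (mono k d hk le_rfl) hih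
  set f : ℕ → ℝ := fun k => (2:ℝ) ^ k * (τ⁻¹) ^ (i k) with hf
  set S := ∑ k' ∈ Finset.range (d + 1), f k' with hSdef
  have hfpos : ∀ k, (0:ℝ) < f k := fun k => by positivity
  have hSpos : 0 < S := Finset.sum_pos (fun k _ => hfpos k) ⟨0, by simp⟩
  have hcancel : ∀ n : ℕ, (τ⁻¹:ℝ) ^ n * τ ^ n = 1 := by
    intro n; rw [inv_pow, inv_mul_cancel₀ (pow_ne_zero n hτne)]
  -- S * τ^h ≤ 2^(d+1)
  have hSle : S * τ ^ h ≤ 2 ^ (d + 1) := by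
    have h1 : S ≤ ∑ k ∈ Finset.range (d+1), (2:ℝ)^k * (τ⁻¹)^h := by
      rw [hSdef]
      apply Finset.sum_le_sum
      intro k hk
      have hk' : k ≤ d := by simpa [Nat.lt_succ_iff] using hk
      have h5 : (τ⁻¹:ℝ) ^ (i k) ≤ (τ⁻¹) ^ h :=
        pow_le_pow_right₀ (one_le_inv_iff₀.mpr ⟨hτ0, hτ1.le⟩) (hile k hk')
      simp only [hf]
      exact mul_le_mul_of_nonneg_left h5 (by positivity)
    have h2 : ∑ k ∈ Finset.range (d+1), (2:ℝ)^k * (τ⁻¹)^h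
        = (2^(d+1) - 1) * (τ⁻¹)^h := by
      rw [← Finset.sum_mul, geom_sum_eq (by norm_num)]
      ring
    have h3 : (0:ℝ) < τ ^ h := pow_pos hτ0 h
    have h4 : (τ⁻¹:ℝ) ^ h * τ ^ h = 1 := hcancel h
    nlinarith [pow_pos (show (0:ℝ) < 2 by norm_num) (d+1)]
  have hrS : r * τ ^ h ≤ 1 / S := by
    rw [le_div_iff₀ hSpos]
    have h3 : (0:ℝ) < τ ^ h := pow_pos hτ0 h
    have h5 : (0:ℝ) < 2 ^ (d+1) := by positivity
    have h6 : r * τ ^ h ≤ ((2:ℝ)^(d+1))⁻¹ * τ ^ h :=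
      mul_le_mul_of_nonneg_right hr h3.le
    calc r * τ ^ h * S ≤ ((2:ℝ)^(d+1))⁻¹ * τ ^ h * S :=
          mul_le_mul_of_nonneg_right h6 hSpos.le
      _ = ((2:ℝ)^(d+1))⁻¹ * (S * τ ^ h) := by ring
      _ ≤ ((2:ℝ)^(d+1))⁻¹ * 2^(d+1) :=
          mul_le_mul_of_nonneg_left hSle (by positivity)
      _ = 1 := inv_mul_cancel₀ (ne_of_gt h5)
  -- key norm bound
  have key : ∀ j ≤ d,
      ‖(∑ k ∈ Finset.range (d + 1), (f k / S) • v k) - v j‖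
        ≤ τ ^ (i j) - r * τ ^ h := by
    intro j hj
    have hsum1 : ∑ k ∈ Finset.range (d+1), f k / S = 1 := by
      rw [← Finset.sum_div, ← hSdef, div_self (ne_of_gt hSpos)]
    have hrw : (∑ k ∈ Finset.range (d + 1), (f k / S) • v k) - v j
        = ∑ k ∈ Finset.range (d + 1), (f k / S) • (v k - v j) := by
      have : ∑ k ∈ Finset.range (d + 1), (f k / S) • (v k - v j)
          = (∑ k ∈ Finset.range (d + 1), (f k / S) • v k)
            - (∑ k ∈ Finset.range (d+1), f k / S) • v j := by
        rw [Finset.sum_smul, ← Finset.sum_sub_distrib]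
        simp [smul_sub]
      rw [this, hsum1, one_smul]
    -- bound each term
    set b : ℕ → ℝ := fun k => if k = j then 0 else τ ^ (min (i k) (i j)) with hb
    have hnorm : ‖(∑ k ∈ Finset.range (d + 1), (f k / S) • v k) - v j‖
        ≤ ∑ k ∈ Finset.range (d+1), (f k / S) * b k := by
      rw [hrw]
      refine le_trans (norm_sum_le _ _) (Finset.sum_le_sum ?_)
      intro k hk
      have hk' : k ≤ d := by simpa [Nat.lt_succ_iff] using hk
      rw [norm_smul, Real.norm_eq_abs, abs_of_pos (div_pos (hfpos k) hSpos)]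
      apply mul_le_mul_of_nonneg_left _ (div_pos (hfpos k) hSpos).le
      by_cases hkj : k = j
      · simp [hb, hkj]
      · simp only [hb, if_neg hkj]
        exact hv k hk' j hj
    -- main combinatorial estimate
    have hmain : ∑ k ∈ Finset.range (d+1), (f k / S) * b k ≤ τ ^ (i j) - 1 / S := by
      have split : ∀ g : ℕ → ℝ, ∑ k ∈ Finset.range (d+1), g k
          = (∑ k ∈ Finset.range j, g k) + g j + ∑ k ∈ Finset.Ico (j+1) (d+1), g k := by
        intro g
        rw [Finset.range_eq_Ico,
          ← Finset.sum_Ico_consecutive g (Nat.zero_le (j+1)) (by omega : j+1 ≤ d+1),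
          ← Finset.range_eq_Ico, Finset.sum_range_succ]
      have e1 : ∀ k < j, f k * b k = 2 ^ k := by
        intro k hk
        have hkj : i k < i j := smono k j hk hj
        simp only [hf, hb, if_neg (Nat.ne_of_lt hk), min_eq_left hkj.le]
        rw [mul_assoc, hcancel, mul_one]
      have e2 : ∀ k, j < k → k ≤ d → f k * b k = f k * τ ^ (i j) := by
        intro k hk hkd
        simp only [hb, if_neg (Nat.ne_of_gt hk), min_eq_right (smono j k hk hkd).le]
      have hsd : ∑ k ∈ Finset.range (d+1), (f k / S) * b k
          = (∑ k ∈ Finset.range (d+1), f k * b k) / S := by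
        rw [Finset.sum_div]; exact Finset.sum_congr rfl (fun k _ => by ring)
      rw [hsd, div_le_iff₀ hSpos]
      have hRHS : (τ ^ (i j) - 1/S) * S = τ ^ (i j) * S - 1 := by
        field_simp
      rw [hRHS]
      have lhs_eq : ∑ k ∈ Finset.range (d+1), f k * b k
          = (2:ℝ)^j - 1 + ∑ k ∈ Finset.Ico (j+1) (d+1), f k * τ^(i j) := by
        rw [split (fun k => f k * b k)]
        have t1 : ∑ k ∈ Finset.range j, f k * b k = ∑ k ∈ Finset.range j, (2:ℝ)^k :=
          Finset.sum_congr rfl (fun k hk => e1 k (Finset.mem_range.mp hk))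
        have t2 : ∑ k ∈ Finset.Ico (j+1) (d+1), f k * b k
            = ∑ k ∈ Finset.Ico (j+1) (d+1), f k * τ^(i j) :=
          Finset.sum_congr rfl (fun k hk => by
            obtain ⟨h1, h2⟩ := Finset.mem_Ico.mp hk
            exact e2 k (by omega) (by omega))
        rw [t1, t2, geom_sum_eq (by norm_num), show f j * b j = 0 by simp [hb]]
        ring
      have rhs_eq : τ^(i j) * S = (∑ k ∈ Finset.range j, f k * τ^(i j)) + 2^j
          + ∑ k ∈ Finset.Ico (j+1) (d+1), f k * τ^(i j) := by
        have t0 : τ^(i j) * S = ∑ k ∈ Finset.range (d+1), f k * τ^(i j) := by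
          rw [hSdef, Finset.mul_sum]
          exact Finset.sum_congr rfl (fun k _ => mul_comm _ _)
        rw [t0, split (fun k => f k * τ^(i j))]
        have : f j * τ^(i j) = 2^j := by
          simp only [hf]; rw [mul_assoc, hcancel, mul_one]
        rw [this]
      have hnn : (0:ℝ) ≤ ∑ k ∈ Finset.range j, f k * τ^(i j) :=
        Finset.sum_nonneg (fun k _ => by positivity)
      rw [lhs_eq, rhs_eq]
      linarith
    linarith [hnorm, hmain, hrS]
  refine ⟨key, ?_⟩
  simp only [Set.mem_iInter, Finset.mem_range, Nat.lt_succ_iff]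
  intro j hj
  refine ⟨v j - (∑ k ∈ Finset.range (d + 1), (f k / S) • v k), ?_, by abel_nf; rfl⟩
  rw [Metric.mem_closedBall, dist_zero_right, norm_sub_rev]
  exact key j hj
end

section
/- (Deterministic core of Proposition 3.3.) Let $\|\cdot\|$ be a norm on $\mathbb{R}^d$, $\tau \in (0,1)$, and let $K$ be a convex body with $B_\varepsilon \subseteq K \subseteq B_1$ for some $\varepsilon > 0$. Set $r := \min(\varepsilon, 1) 2^{-d-1}$. Let $(u_h)_{h \ge 0}$ be any sequence with $u_h \in \widehat{J}_h$ for all $h$, where $\widehat{J}_0 = K$ and $\widehat{J}_{h+1} = \tau^{-1}(\widehat{J}_h - u_h) \cap B_1$. Then for every $h \ge 0$, the set $\widehat{J}_h$ contains a closed ball of radius $r$; equivalently, $\widehat{J}_h \ominus B_r \neq \varnothing$. -/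
open Pointwise

open Finset in
section
variable {E : Type*} [NormedAddCommGroup E] [NormedSpace ℝ E]

noncomputable def vv (τ : ℝ) (u : ℕ → E) (k h : ℕ) : E := ∑ j ∈ Finset.Ico k h, τ^j • u j

lemma vv_self (τ : ℝ) (u : ℕ → E) (k : ℕ) : vv τ u k k = 0 := by simp [vv]

lemma vv_stop (τ : ℝ) (u : ℕ → E) (k h : ℕ) (hk : h ≤ k) : vv τ u k h = 0 := by
  rw [vv, Finset.Ico_eq_empty (by omega), Finset.sum_empty]

lemma vv_succ (τ : ℝ) (u : ℕ → E) (k h : ℕ) (hk : k ≤ h) :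
    vv τ u k (h+1) = vv τ u k h + τ^h • u h := by
  rw [vv, vv, Finset.sum_Ico_succ_top hk]

lemma vv_split (τ : ℝ) (u : ℕ → E) (k k' h : ℕ) (h1 : k ≤ k') (h2 : k' ≤ h) :
    vv τ u k h = vv τ u k k' + vv τ u k' h := by
  rw [vv, vv, vv, Finset.sum_Ico_consecutive _ h1 h2]

theorem memJ
    (τ : ℝ) (hτ : τ ∈ Set.Ioo (0:ℝ) 1)
    (K : Set E)
    (u : ℕ → E) (J : ℕ → Set E)
    (hJ0 : J 0 = K)
    (hJ : ∀ h : ℕ, J (h + 1)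
        = (τ⁻¹ • ((fun x => x - u h) '' J h)) ∩ Metric.closedBall 0 1) :
    ∀ h (x : E), x ∈ J h ↔
      (τ^h • x + vv τ u 0 h ∈ K ∧ ∀ k, 1 ≤ k → k ≤ h → ‖τ^h • x + vv τ u k h‖ ≤ τ^k) := by
  obtain ⟨hτ0, hτ1⟩ := hτ
  intro h
  induction h with
  | zero =>
    intro x
    simp only [pow_zero, one_smul, vv_self, add_zero, hJ0]
    constructor
    · exact fun hx => ⟨hx, fun k hk1 hk2 => by omega⟩
    · exact fun hx => hx.1
  | succ h ih =>
    intro x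
    have hmem : x ∈ J (h+1) ↔ (τ • x + u h ∈ J h ∧ ‖x‖ ≤ 1) := by
      rw [hJ h]
      constructor
      · rintro ⟨hx1, hx2⟩
        rw [Set.mem_inv_smul_set_iff₀ (ne_of_gt hτ0)] at hx1
        obtain ⟨y, hy, hyx⟩ := hx1
        refine ⟨?_, by simpa using hx2⟩
        have hyy : y = τ • x + u h := by
          simp only at hyx
          rw [sub_eq_iff_eq_add] at hyx
          rw [hyx]
        rwa [← hyy]
      · rintro ⟨hx1, hx2⟩
        refine ⟨?_, by simpa using hx2⟩
        rw [Set.mem_inv_smul_set_iff₀ (ne_of_gt hτ0)]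
        exact ⟨τ • x + u h, hx1, by simp⟩
    rw [hmem, ih (τ • x + u h)]
    have key : ∀ k : ℕ, τ ^ h • (τ • x + u h) + vv τ u k h
        = τ^(h+1) • x + (vv τ u k h + τ^h • u h) := by
      intro k
      rw [smul_add, smul_smul, ← pow_succ]
      abel
    have hpow : (0:ℝ) < τ^(h+1) := by positivity
    constructor
    · rintro ⟨⟨h1, h2⟩, h3⟩
      rw [key] at h1
      constructor
      · rw [vv_succ τ u 0 h (by omega)]; exact h1
      · intro k hk1 hk2
        rcases Nat.lt_or_ge k (h+1) with hlt | hge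
        · rw [vv_succ τ u k h (by omega)]
          have := h2 k hk1 (by omega)
          rwa [key] at this
        · have hk : k = h+1 := by omega
          subst hk
          rw [vv_self, add_zero, norm_smul]
          simp only [Real.norm_eq_abs, abs_pow, abs_of_pos hτ0]
          nlinarith [norm_nonneg x]
    · rintro ⟨h1, h2⟩
      have h3 : ‖x‖ ≤ 1 := by
        have := h2 (h+1) (by omega) le_rfl
        rw [vv_self, add_zero, norm_smul] at this
        simp only [Real.norm_eq_abs, abs_pow, abs_of_pos hτ0] at this
        nlinarith [norm_nonneg x]
      refine ⟨⟨?_, ?_⟩, h3⟩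
      · rw [key, ← vv_succ τ u 0 h (by omega)]; exact h1
      · intro k hk1 hk2
        rw [key, ← vv_succ τ u k h (by omega)]
        exact h2 k hk1 (by omega)

theorem vv_bounds
    (τ : ℝ) (hτ : τ ∈ Set.Ioo (0:ℝ) 1)
    (K : Set E) (ε : ℝ) (hε : 0 < ε)
    (hεK : Metric.closedBall (0 : E) ε ⊆ K) (hK1 : K ⊆ Metric.closedBall 0 1)
    (u : ℕ → E) (J : ℕ → Set E)
    (memJ : ∀ h (x : E), x ∈ J h ↔
      (τ^h • x + vv τ u 0 h ∈ K ∧ ∀ k, 1 ≤ k → k ≤ h → ‖τ^h • x + vv τ u k h‖ ≤ τ^k))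
    (hu : ∀ h, u h ∈ J h) :
    ∀ h : ℕ, vv τ u 0 h ∈ K ∧ ∀ k, ‖vv τ u k h‖ ≤ τ^k := by
  obtain ⟨hτ0, hτ1⟩ := hτ
  have hKn : ∀ y ∈ K, ‖y‖ ≤ 1 := by
    intro y hy; simpa [Metric.mem_closedBall] using hK1 hy
  intro h
  induction h with
  | zero =>
    constructor
    · rw [vv_self]; exact hεK (by simp [hε.le])
    · intro k; rw [vv_stop τ u k 0 (by omega)]; simp; positivity
  | succ h ih =>
    have hmem := (memJ h (u h)).mp (hu h)
    constructor
    · rw [vv_succ τ u 0 h (by omega), add_comm]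
      exact hmem.1
    · intro k
      rcases Nat.lt_or_ge k (h+1) with hlt | hge
      · rcases Nat.eq_zero_or_pos k with rfl | hk1
        · rw [vv_succ τ u 0 h (by omega), add_comm, pow_zero]
          exact hKn _ hmem.1
        · rw [vv_succ τ u k h (by omega), add_comm]
          exact hmem.2 k hk1 (by omega)
      · rw [vv_stop τ u k (h+1) hge]; simp; positivity

theorem chain
    (τ : ℝ) (hτ : τ ∈ Set.Ioo (0:ℝ) 1)
    (K : Set E) (hKconv : Convex ℝ K) (ε : ℝ) (hε : 0 < ε)
    (hεK : Metric.closedBall (0 : E) ε ⊆ K) (hK1 : K ⊆ Metric.closedBall 0 1)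
    (u : ℕ → E)
    (vK : ∀ h, vv τ u 0 h ∈ K) (vB : ∀ k h, ‖vv τ u k h‖ ≤ τ^k)
    (h : ℕ) :
    ∀ m (I : Finset ℕ) (hne : I.Nonempty), I.card = m + 1 → (∀ k ∈ I, k ≤ h) →
    ∃ (x : E) (s : ℝ), min ε 1 * τ^(I.max' hne) / (2^(m+1) - 1) ≤ s ∧
      ∀ k ∈ I, ∀ w : E, ‖w‖ ≤ s →
        x + vv τ u k h + w ∈ (if k = 0 then K else Metric.closedBall 0 (τ^k)) := by
  obtain ⟨hτ0, hτ1⟩ := hτ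
  set μ := min ε 1 with hμdef
  have hμ0 : 0 < μ := lt_min hε one_pos
  have hμ1 : μ ≤ 1 := min_le_right _ _
  have hμε : μ ≤ ε := min_le_left _ _
  -- membership of vv k k' in the k-th set
  have hvmem : ∀ k k' : ℕ, k ≤ k' →
      vv τ u k k' ∈ (if k = 0 then K else Metric.closedBall (0:E) (τ^k)) := by
    intro k k' hkk'
    rcases Nat.eq_zero_or_pos k with rfl | hk1
    · simpa using vK k'
    · simp only [if_neg (by omega : ¬ k = 0), Metric.mem_closedBall, dist_zero_right]
      exact vB k k'
  -- the k-th set is inside the ball of radius τ^k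
  have hsub : ∀ k : ℕ, (if k = 0 then K else Metric.closedBall (0:E) (τ^k))
      ⊆ Metric.closedBall 0 (τ^k) := by
    intro k
    rcases Nat.eq_zero_or_pos k with rfl | hk1
    · simpa using hK1
    · simp [if_neg (by omega : ¬ k = 0)]
  -- the k-th set contains the ball of radius μ * τ^k
  have hball : ∀ k : ℕ, Metric.closedBall (0:E) (μ * τ^k)
      ⊆ (if k = 0 then K else Metric.closedBall (0:E) (τ^k)) := by
    intro k
    rcases Nat.eq_zero_or_pos k with rfl | hk1
    · simp only [if_pos rfl, pow_zero, mul_one]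
      exact fun y hy => hεK (Metric.closedBall_subset_closedBall hμε hy)
    · rw [if_neg (by omega : ¬ k = 0)]
      exact Metric.closedBall_subset_closedBall
        (by nlinarith [pow_pos hτ0 k, pow_nonneg hτ0.le k])
  -- convexity
  have hconv : ∀ k : ℕ, Convex ℝ (if k = 0 then K else Metric.closedBall (0:E) (τ^k)) := by
    intro k
    rcases Nat.eq_zero_or_pos k with rfl | hk1
    · simpa using hKconv
    · rw [if_neg (by omega : ¬ k = 0)]; exact convex_closedBall _ _
  intro m
  induction m with
  | zero =>
    intro I hne hcard hIh
    set k := I.max' hne with hk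
    refine ⟨-vv τ u k h, μ * τ^k, by norm_num, ?_⟩
    intro k0 hk0 w hw
    have hkk : k0 = k := Finset.card_le_one.mp (by omega) k0 hk0 k (I.max'_mem hne)
    subst hkk
    have heq : -vv τ u k h + vv τ u k h + w = w := by abel
    rw [heq]
    exact hball k (by simpa [Metric.mem_closedBall] using hw)
  | succ m ihm =>
    intro I hne hcard hIh
    set kM := I.max' hne with hkM
    have hkMI : kM ∈ I := I.max'_mem hne
    set I' := I.erase kM with hI'
    have hcard' : I'.card = m + 1 := by
      rw [hI', Finset.card_erase_of_mem hkMI, hcard]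
      omega
    have hne' : I'.Nonempty := Finset.card_pos.mp (by omega)
    set k' := I'.max' hne' with hk'
    have hk'I' : k' ∈ I' := I'.max'_mem hne'
    have hk'I : k' ∈ I := Finset.mem_of_mem_erase hk'I'
    have hk'ne : k' ≠ kM := Finset.ne_of_mem_erase hk'I'
    have hk'le : k' < kM := lt_of_le_of_ne (I.le_max' k' hk'I) hk'ne
    have hkMh : kM ≤ h := hIh kM hkMI
    obtain ⟨x', s', hs', hmem⟩ := ihm I' hne' hcard' (fun k hk => hIh k (Finset.mem_of_mem_erase hk))
    -- abbreviations
    set T' := τ ^ k' with hT'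
    set TM := τ ^ kM with hTM
    have hT'0 : (0:ℝ) < T' := pow_pos hτ0 k'
    have hTM0 : (0:ℝ) < TM := pow_pos hτ0 kM
    have hTMT' : TM ≤ T' := pow_le_pow_of_le_one hτ0.le hτ1.le hk'le.le
    have h2m : (1:ℝ) ≤ 2^(m+1) - 1 := by
      have : (2:ℝ) ≤ 2^(m+1) := le_self_pow₀ one_le_two (by omega)
      linarith
    have hs'0 : 0 < s' := lt_of_lt_of_le (by positivity) hs'
    set θ := TM / (s' + 2 * T') with hθ
    have hθ0 : 0 < θ := by positivity
    have hθ1 : θ ≤ 1 := by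
      rw [hθ, div_le_one (by positivity)]
      linarith
    refine ⟨θ • x' - (1 - θ) • vv τ u kM h, θ * s', ?_, ?_⟩
    · -- slack bound
      have hs'' : μ * T' ≤ s' * (2^(m+1) - 1) := by
        rw [div_le_iff₀ (by linarith)] at hs'
        exact hs'
      have key : μ * (s' + 2 * T') ≤ s' * (2^(m+1+1) - 1) := by
        have h2 : (2:ℝ)^(m+1+1) = 2 * 2^(m+1) := by ring
        nlinarith
      rw [div_le_iff₀ (by nlinarith), hθ, div_mul_eq_mul_div, div_mul_eq_mul_div,
        le_div_iff₀ (by positivity)]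
      nlinarith
    · intro k hkI w hw
      rcases eq_or_ne k kM with rfl | hkne
      · -- the new (smallest) set
        rw [if_neg (by omega : ¬ kM = 0)]
        have heq : θ • x' - (1 - θ) • vv τ u kM h + vv τ u kM h + w
            = θ • (x' + vv τ u kM h) + w := by
          rw [smul_add]; module
        rw [heq]
        have hx'k' : ‖x' + vv τ u k' h‖ ≤ T' := by
          have := hmem k' hk'I' 0 (by simp [hs'0.le])
          have h2 := hsub k' this
          simpa [Metric.mem_closedBall, dist_zero_right] using h2
        have hsplit : vv τ u k' h = vv τ u k' kM + vv τ u kM h :=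
          vv_split τ u k' kM h hk'le.le hkMh
        have hx'kM : ‖x' + vv τ u kM h‖ ≤ 2 * T' := by
          have : x' + vv τ u kM h = (x' + vv τ u k' h) - vv τ u k' kM := by
            rw [hsplit]; abel
          rw [this]
          calc ‖(x' + vv τ u k' h) - vv τ u k' kM‖
              ≤ ‖x' + vv τ u k' h‖ + ‖vv τ u k' kM‖ := norm_sub_le _ _
            _ ≤ T' + T' := add_le_add hx'k' (vB k' kM)
            _ = 2 * T' := by ring
        rw [Metric.mem_closedBall, dist_zero_right]
        calc ‖θ • (x' + vv τ u kM h) + w‖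
            ≤ ‖θ • (x' + vv τ u kM h)‖ + ‖w‖ := norm_add_le _ _
          _ ≤ θ * (2 * T') + θ * s' := by
              rw [norm_smul, Real.norm_eq_abs, abs_of_pos hθ0]
              exact add_le_add (mul_le_mul_of_nonneg_left hx'kM hθ0.le) hw
          _ = θ * (s' + 2 * T') := by ring
          _ = TM := by rw [hθ]; field_simp
      · -- an old set
        have hkI' : k ∈ I' := Finset.mem_erase.mpr ⟨hkne, hkI⟩
        have hkkM : k ≤ kM := I.le_max' k hkI
        set w' := θ⁻¹ • w with hw'
        have hww' : w = θ • w' := by rw [hw', smul_inv_smul₀ hθ0.ne']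
        have hw's : ‖w'‖ ≤ s' := by
          rw [hw', norm_smul, Real.norm_eq_abs, abs_of_pos (by positivity : (0:ℝ) < θ⁻¹)]
          have h2 : θ⁻¹ * ‖w‖ ≤ θ⁻¹ * (θ * s') := mul_le_mul_of_nonneg_left hw (by positivity)
          simpa [inv_mul_cancel_left₀ hθ0.ne'] using h2
        have hsplit : vv τ u k h = vv τ u k kM + vv τ u kM h :=
          vv_split τ u k kM h hkkM hkMh
        have heq : θ • x' - (1 - θ) • vv τ u kM h + vv τ u k h + w
            = (1 - θ) • vv τ u k kM + θ • (x' + vv τ u k h + w') := by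
          rw [hww', hsplit]
          module
        rw [heq]
        exact hconv k (hvmem k kM hkkM) (hmem k hkI' w' hw's) (by linarith) hθ0.le (by ring)
end


/-- Deterministic core of Proposition 3.3: along the recursion
`Ĵ₀ = K`, `Ĵ_{h+1} = τ⁻¹(Ĵ_h - u_h) ∩ B_1` with `u_h ∈ Ĵ_h`, where
`B_ε ⊆ K ⊆ B_1` is a convex body, every `Ĵ_h` contains a closed ball of radius
`r = min(ε,1)·2^{-(d+1)}`, `d` the dimension. -/
theorem recursion_contains_ball
    {E : Type*} [NormedAddCommGroup E] [NormedSpace ℝ E] [FiniteDimensional ℝ E]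
    (τ : ℝ) (hτ : τ ∈ Set.Ioo (0:ℝ) 1)
    (K : Set E) (hKconv : Convex ℝ K) (hKcomp : IsCompact K)
    (ε : ℝ) (hε : 0 < ε)
    (hεK : Metric.closedBall (0 : E) ε ⊆ K) (hK1 : K ⊆ Metric.closedBall 0 1)
    (u : ℕ → E) (J : ℕ → Set E)
    (hJ0 : J 0 = K)
    (hJ : ∀ h : ℕ, J (h + 1)
        = (τ⁻¹ • ((fun x => x - u h) '' J h)) ∩ Metric.closedBall 0 1)
    (hu : ∀ h, u h ∈ J h) :
    ∀ h : ℕ, ∃ c : E,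
      Metric.closedBall c (min ε 1 * ((2:ℝ) ^ (Module.finrank ℝ E + 1))⁻¹) ⊆ J h := by
  obtain ⟨hτ0, hτ1⟩ := hτ
  have hτm : τ ∈ Set.Ioo (0:ℝ) 1 := ⟨hτ0, hτ1⟩
  have memJ' := memJ τ hτm K u J hJ0 hJ
  have hv := vv_bounds τ hτm K ε hε hεK hK1 u J memJ' hu
  have vK : ∀ h, vv τ u 0 h ∈ K := fun h => (hv h).1
  have vB : ∀ k h, ‖vv τ u k h‖ ≤ τ^k := fun k h => (hv h).2 k
  have hchain := chain τ hτm K hKconv ε hε hεK hK1 u vK vB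
  intro h
  set d := Module.finrank ℝ E with hd
  set μ := min ε 1 with hμdef
  have hμ0 : 0 < μ := lt_min hε one_pos
  set r := μ * ((2:ℝ)^(d+1))⁻¹ with hr
  set ρ := τ^h * r with hρ
  have hρ0 : 0 < ρ := by positivity
  set C : ℕ → Set E := fun k => {x | ∀ w : E, ‖w‖ ≤ ρ →
      x + vv τ u k h + w ∈ (if k = 0 then K else Metric.closedBall 0 (τ^k))} with hC
  have hconvC : ∀ k ∈ Finset.Icc 0 h, Convex ℝ (C k) := by
    intro k _
    have hck : Convex ℝ (if k = 0 then K else Metric.closedBall (0:E) (τ^k)) := by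
      rcases Nat.eq_zero_or_pos k with rfl | hk1
      · simpa using hKconv
      · rw [if_neg (by omega : ¬ k = 0)]; exact convex_closedBall _ _
    intro x hx y hy a b ha hb hab
    intro w hw
    have h1 : a • (x + vv τ u k h + w) + b • (y + vv τ u k h + w)
        = a • x + b • y + (a+b) • vv τ u k h + (a+b) • w := by module
    simp only [hab, one_smul] at h1
    have h2 := hck (hx w hw) (hy w hw) ha hb hab
    rw [h1] at h2
    exact h2
  have hinter : ∀ I ⊆ Finset.Icc 0 h, I.card ≤ d + 1 → (⋂ i ∈ I, C i).Nonempty := by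
    intro I hIs hIcard
    rcases I.eq_empty_or_nonempty with rfl | hne
    · exact ⟨0, by simp⟩
    have hIh : ∀ k ∈ I, k ≤ h := by
      intro k hk
      exact (Finset.mem_Icc.mp (hIs hk)).2
    obtain ⟨m, hm⟩ : ∃ m, I.card = m + 1 := ⟨I.card - 1, by
      have := Finset.card_pos.mpr hne; omega⟩
    have hmd : m ≤ d := by omega
    obtain ⟨x, s, hs, hmem⟩ := hchain h m I hne hm hIh
    set kM := I.max' hne with hkM
    have hkMh : kM ≤ h := hIh kM (I.max'_mem hne)
    have hρs : ρ ≤ s := by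
      refine le_trans ?_ hs
      have e1 : τ^h ≤ τ^(kM) := pow_le_pow_of_le_one hτ0.le hτ1.le hkMh
      have e2 : (2:ℝ)^(m+1) - 1 ≤ 2^(d+1) := by
        have : (2:ℝ)^(m+1) ≤ 2^(d+1) := pow_le_pow_right₀ one_le_two (by omega)
        linarith
      have e3 : (0:ℝ) < 2^(m+1) - 1 := by
        have : (2:ℝ) ≤ 2^(m+1) := le_self_pow₀ one_le_two (by omega)
        linarith
      rw [hρ, hr, le_div_iff₀ e3]
      calc τ ^ h * (μ * ((2:ℝ)^(d+1))⁻¹) * (2^(m+1) - 1)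
          ≤ τ ^ h * (μ * ((2:ℝ)^(d+1))⁻¹) * 2^(d+1) := by
            apply mul_le_mul_of_nonneg_left e2 (by positivity)
        _ = τ ^ h * μ := by field_simp
        _ ≤ τ ^ kM * μ := mul_le_mul_of_nonneg_right e1 hμ0.le
        _ = μ * τ ^ kM := mul_comm _ _
    refine ⟨x, ?_⟩
    rw [Set.mem_iInter₂]
    intro k hk
    exact fun w hw => hmem k hk w (le_trans hw hρs)
  obtain ⟨y, hy⟩ := Convex.helly_theorem' (𝕜 := ℝ) (F := C) (s := Finset.Icc 0 h)
    hconvC hinter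
  have hyC : ∀ k ∈ Finset.Icc 0 h, y ∈ C k := by
    simpa [Set.mem_iInter₂] using hy
  have hτh : (0:ℝ) < τ^h := pow_pos hτ0 h
  refine ⟨(τ^h)⁻¹ • y, ?_⟩
  intro z hz
  rw [memJ' h z]
  set w := τ^h • z - y with hwdef
  have hyw : τ^h • z = y + w := by rw [hwdef]; abel
  have hwn : ‖w‖ ≤ ρ := by
    rw [hwdef]
    have : τ^h • z - y = τ^h • (z - (τ^h)⁻¹ • y) := by
      rw [smul_sub, smul_inv_smul₀ hτh.ne']
    rw [this, norm_smul, Real.norm_eq_abs, abs_of_pos hτh]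
    have hzc : ‖z - (τ^h)⁻¹ • y‖ ≤ r := by
      simpa [Metric.mem_closedBall, dist_eq_norm] using hz
    rw [hρ]
    exact mul_le_mul_of_nonneg_left hzc hτh.le
  constructor
  · have := hyC 0 (Finset.mem_Icc.mpr ⟨le_refl 0, Nat.zero_le h⟩) w hwn
    rw [if_pos rfl] at this
    have heq : y + vv τ u 0 h + w = τ^h • z + vv τ u 0 h := by rw [hyw]; abel
    rwa [heq] at this
  · intro k hk1 hk2
    have := hyC k (Finset.mem_Icc.mpr ⟨Nat.zero_le k, hk2⟩) w hwn
    rw [if_neg (by omega : ¬ k = 0)] at this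
    have heq : y + vv τ u k h + w = τ^h • z + vv τ u k h := by rw [hyw]; abel
    rw [heq] at this
    simpa [Metric.mem_closedBall, dist_zero_right] using this
end
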